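/- A finite subset S of the positive integers is the β-set of an (n, dn+1)-core partition with distinct parts if and only if: (i) S ⊆ {(i-1)n + j : 1 ≤ i ≤ d, 1 ≤ j ≤ n-1}; (ii) if in + j ∈ S with 1 ≤ i ≤ d-1 and 1 ≤ j ≤ n-1, then (i-1)n + j ∈ S; and (iii) if j ∈ S with 1 ≤ j ≤ n-2, then j+1 ∉ S. -/

import Mathlib

def hook (Y : YoungDiagram) (i j : ℕ) : ℕ :=
  (Y.rowLen i - j) + (Y.colLen j - i) - 1

def IsCore (Y : YoungDiagram) (t : ℕ) : Prop :=
  ∀ c ∈ Y.cells, ¬ (t ∣ hook Y c.1 c.2)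

def DistinctParts (Y : YoungDiagram) : Prop :=
  ∀ i : ℕ, 0 < Y.rowLen (i + 1) → Y.rowLen (i + 1) < Y.rowLen i

def betaSet (Y : YoungDiagram) : Finset ℕ :=
  (Finset.range (Y.colLen 0)).image (fun i => Y.rowLen i + (Y.colLen 0 - 1 - i))

namespace BetaAux

/-- The beta number of row `i`. -/
def b (Y : YoungDiagram) (i : ℕ) : ℕ := Y.rowLen i + (Y.colLen 0 - 1 - i)

/-- Enumeration of the complement of the beta set. -/
def f (Y : YoungDiagram) (j : ℕ) : ℕ := j + (Y.colLen 0 - Y.colLen j)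

variable (Y : YoungDiagram)

lemma colLen_le (j : ℕ) : Y.colLen j ≤ Y.colLen 0 := Y.colLen_anti 0 j (Nat.zero_le j)

lemma lt_colLen_iff {i j : ℕ} : i < Y.colLen j ↔ j < Y.rowLen i := by
  rw [← YoungDiagram.mem_iff_lt_colLen (μ := Y) (i := i) (j := j),
    YoungDiagram.mem_iff_lt_rowLen]

lemma row_pos_iff {i : ℕ} : i < Y.colLen 0 ↔ 0 < Y.rowLen i := lt_colLen_iff Y

lemma f_lt_b {k j : ℕ} (h : k < Y.colLen j) : f Y j < b Y k := by
  have h1 : j < Y.rowLen k := (lt_colLen_iff Y).1 h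
  have h2 := colLen_le Y j
  unfold f b
  omega

lemma b_lt_f {k j : ℕ} (hk : k < Y.colLen 0) (h : Y.colLen j ≤ k) : b Y k < f Y j := by
  have h1 : Y.rowLen k ≤ j := by
    by_contra hc
    push_neg at hc
    have := (lt_colLen_iff Y).2 hc
    omega
  have h2 := colLen_le Y j
  unfold f b
  omega

lemma mem_betaSet {x : ℕ} : x ∈ betaSet Y ↔ ∃ i, i < Y.colLen 0 ∧ b Y i = x := by
  simp only [betaSet, Finset.mem_image, Finset.mem_range, b]

lemma f_not_mem (j : ℕ) : f Y j ∉ betaSet Y := by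
  rw [mem_betaSet]
  rintro ⟨k, hk, hbk⟩
  rcases lt_or_ge k (Y.colLen j) with h | h
  · have := f_lt_b Y (j := j) h
    omega
  · have := b_lt_f Y hk h
    omega

lemma f_strictMono : StrictMono (f Y) := by
  apply strictMono_nat_of_lt_succ
  intro j
  have h1 : Y.colLen (j+1) ≤ Y.colLen j := Y.colLen_anti j (j+1) (by omega)
  have h2 := colLen_le Y j
  unfold f
  omega

lemma b_strictAnti {i k : ℕ} (h : i < k) (hk : k < Y.colLen 0) : b Y k < b Y i := by
  have h1 := Y.rowLen_anti i k h.le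
  unfold b
  omega

lemma mem_or_f (y : ℕ) : y ∈ betaSet Y ∨ ∃ j, f Y j = y := by
  by_cases hy : y ∈ betaSet Y
  · exact Or.inl hy
  right
  set ℓ := Y.colLen 0 with hℓ
  set J := y + 1 with hJ
  have hfJ : y < f Y J := lt_of_lt_of_le (by omega) ((f_strictMono Y).le_apply)
  set A : Finset ℕ := (Finset.Ico (Y.colLen J) ℓ).image (b Y) with hA
  set B : Finset ℕ := (Finset.range J).image (f Y) with hB
  have hBcard : B.card = J := by
    rw [hB, Finset.card_image_of_injective _ (f_strictMono Y).injective, Finset.card_range]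
  have hcJ : Y.colLen J ≤ ℓ := colLen_le Y J
  have hbinj : Set.InjOn (b Y) (Finset.Ico (Y.colLen J) ℓ) := by
    intro a ha c hc hac
    simp only [Finset.coe_Ico, Set.mem_Ico] at ha hc
    by_contra hne
    rcases Nat.lt_or_ge a c with h | h
    · have := b_strictAnti Y h hc.2
      omega
    · have hca : c < a := by omega
      have := b_strictAnti Y hca ha.2
      omega
  have hAcard : A.card = ℓ - Y.colLen J := by
    rw [hA, Finset.card_image_of_injOn hbinj, Nat.card_Ico]
  have hdisj : Disjoint A B := by
    rw [Finset.disjoint_left]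
    intro x hx hxB
    rw [hB, Finset.mem_image] at hxB
    obtain ⟨j, _, rfl⟩ := hxB
    apply f_not_mem Y j
    rw [hA, Finset.mem_image] at hx
    obtain ⟨k, hk, hbk⟩ := hx
    rw [Finset.mem_Ico] at hk
    exact (mem_betaSet Y).2 ⟨k, hk.2, hbk⟩
  have hsub : A ∪ B ⊆ Finset.range (f Y J) := by
    intro x hx
    rw [Finset.mem_union] at hx
    rw [Finset.mem_range]
    rcases hx with hx | hx
    · rw [hA, Finset.mem_image] at hx
      obtain ⟨k, hk, rfl⟩ := hx
      rw [Finset.mem_Ico] at hk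
      exact b_lt_f Y hk.2 hk.1
    · rw [hB, Finset.mem_image] at hx
      obtain ⟨j, hj, rfl⟩ := hx
      rw [Finset.mem_range] at hj
      exact f_strictMono Y hj
  have hcards : (Finset.range (f Y J)).card ≤ (A ∪ B).card := by
    rw [Finset.card_union_of_disjoint hdisj, hAcard, hBcard, Finset.card_range]
    unfold f
    omega
  have heq : A ∪ B = Finset.range (f Y J) := Finset.eq_of_subset_of_card_le hsub hcards
  have hyy : y ∈ A ∪ B := by
    rw [heq, Finset.mem_range]; exact hfJ
  rw [Finset.mem_union] at hyy
  rcases hyy with h | h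
  · exfalso
    apply hy
    rw [hA, Finset.mem_image] at h
    obtain ⟨k, hk, hbk⟩ := h
    rw [Finset.mem_Ico] at hk
    exact (mem_betaSet Y).2 ⟨k, hk.2, hbk⟩
  · rw [hB, Finset.mem_image] at h
    obtain ⟨j, _, hj⟩ := h
    exact ⟨j, hj⟩

lemma hook_cell {i j : ℕ} (hij : j < Y.rowLen i) :
    f Y j < b Y i ∧ hook Y i j = b Y i - f Y j := by
  have h1 : i < Y.colLen j := (lt_colLen_iff Y).2 hij
  have h2 := colLen_le Y j
  refine ⟨f_lt_b Y h1, ?_⟩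
  unfold hook f b
  omega

lemma hook_surj {i y : ℕ} (hi : i < Y.colLen 0) (hy : y < b Y i) (hyn : y ∉ betaSet Y) :
    ∃ j, j < Y.rowLen i ∧ hook Y i j = b Y i - y := by
  rcases mem_or_f Y y with h | ⟨j, rfl⟩
  · exact absurd h hyn
  have hj : j < Y.rowLen i := by
    by_contra hc
    push_neg at hc
    have hcol : Y.colLen j ≤ i := by
      by_contra hc2
      push_neg at hc2
      have := (lt_colLen_iff Y).1 hc2
      omega
    have := b_lt_f Y hi hcol
    omega
  exact ⟨j, hj, (hook_cell Y hj).2⟩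

lemma iterate_sub {S : Finset ℕ} {t : ℕ} (h : ∀ x ∈ S, t ≤ x → x - t ∈ S) :
    ∀ m, ∀ x ∈ S, m * t ≤ x → x - m * t ∈ S := by
  intro m
  induction m with
  | zero => intro x hx _; simpa using hx
  | succ k ih =>
    intro x hx hmx
    rw [Nat.succ_mul] at hmx ⊢
    have h1 := ih x hx (by omega)
    have h2 := h _ h1 (by omega)
    have he : x - k * t - t = x - (k * t + t) := by omega
    rwa [he] at h2

lemma isCore_iff {t : ℕ} (ht : 0 < t) :
    IsCore Y t ↔ ∀ x ∈ betaSet Y, t ≤ x → x - t ∈ betaSet Y := by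
  constructor
  · intro hcore x hx htx
    by_contra hxn
    obtain ⟨i, hi, rfl⟩ := (mem_betaSet Y).1 hx
    obtain ⟨j, hj, hhook⟩ := hook_surj Y hi (show b Y i - t < b Y i by omega) hxn
    have hcell : ((i, j) : ℕ × ℕ) ∈ Y.cells :=
      (YoungDiagram.mem_cells _).2 (YoungDiagram.mem_iff_lt_rowLen.2 hj)
    have ht' : hook Y i j = t := by omega
    exact hcore _ hcell (by rw [ht'])
  · intro hcl
    rintro ⟨i, j⟩ hc ⟨m, hm⟩
    rw [YoungDiagram.mem_cells, YoungDiagram.mem_iff_lt_rowLen] at hc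
    obtain ⟨hlt, heq⟩ := hook_cell Y hc
    have hi : i < Y.colLen 0 := (row_pos_iff Y).2 (by omega)
    have hbmem : b Y i ∈ betaSet Y := (mem_betaSet Y).2 ⟨i, hi, rfl⟩
    have hm' : hook Y i j = t * m := hm
    rw [mul_comm] at hm'
    have hle : m * t ≤ b Y i := by omega
    have := iterate_sub hcl m _ hbmem hle
    have hfj : b Y i - m * t = f Y j := by omega
    rw [hfj] at this
    exact f_not_mem Y j this

lemma distinct_iff :
    DistinctParts Y ↔ ∀ x ∈ betaSet Y, x + 1 ∉ betaSet Y := by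
  constructor
  · intro hD x hx hx1
    obtain ⟨k, hk, hbk⟩ := (mem_betaSet Y).1 hx
    obtain ⟨i, hi, hbi⟩ := (mem_betaSet Y).1 hx1
    have hik : i < k := by
      by_contra hc
      push_neg at hc
      rcases Nat.eq_or_lt_of_le hc with h | h
      · subst h
        omega
      · have := b_strictAnti Y h hi
        omega
    have hk1 : k = i + 1 := by
      by_contra hc
      have h1 : i + 1 < k := by omega
      have h2 := b_strictAnti Y (show i < i + 1 by omega) (by omega)
      have h3 := b_strictAnti Y h1 hk
      omega
    subst hk1
    have hrow : 0 < Y.rowLen (i + 1) := (row_pos_iff Y).1 hk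
    have hlt := hD i hrow
    unfold b at hbi hbk
    omega
  · intro h i hpos
    have hi1 : i + 1 < Y.colLen 0 := (row_pos_iff Y).2 hpos
    have hb1 : b Y (i + 1) ∈ betaSet Y := (mem_betaSet Y).2 ⟨_, hi1, rfl⟩
    have hnm := h _ hb1
    have hle := Y.rowLen_anti i (i + 1) (by omega)
    by_contra hc
    push_neg at hc
    apply hnm
    refine (mem_betaSet Y).2 ⟨i, by omega, ?_⟩
    unfold b
    omega

lemma exists_diagram (S : Finset ℕ) (hS : 0 ∉ S) : ∃ Y : YoungDiagram, betaSet Y = S := by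
  classical
  set L := S.sort (· ≤ ·) with hLdef
  set ℓ := S.card with hℓ
  have hlen : L.length = ℓ := S.length_sort _
  have hsorted : List.Pairwise (· < ·) L := (Finset.sortedLT_sort S).pairwise
  have hmemL : ∀ x, x ∈ L ↔ x ∈ S := fun x => Finset.mem_sort _
  set u : ℕ → ℕ := fun k => L.getD k 0 with hu
  have hustep : ∀ k, k + 1 < ℓ → u k < u (k + 1) := by
    intro k hk
    have h1 : k < L.length := by omega
    have h2 : k + 1 < L.length := by omega
    have := hsorted.rel_get_of_lt (a := ⟨k, h1⟩) (b := ⟨k + 1, h2⟩) (by simp)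
    simpa [hu, List.getD_eq_getElem?_getD, List.getElem?_eq_getElem, h1, h2] using this
  have hgap : ∀ m k, k + m < ℓ → u k + m ≤ u (k + m) := by
    intro m
    induction m with
    | zero => intro k _; simp
    | succ p ih =>
      intro k hk
      have h1 := ih k (by omega)
      have h2 := hustep (k + p) (by omega)
      have : k + (p + 1) = (k + p) + 1 := by omega
      rw [this]
      omega
  have hu0 : 0 < ℓ → 1 ≤ u 0 := by
    intro hl
    have h0 : 0 < L.length := by omega
    have : u 0 ∈ S := by
      rw [← hmemL]
      have : u 0 = L[0] := by
        simp [hu, List.getD_eq_getElem?_getD, List.getElem?_eq_getElem, h0]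
      rw [this]
      exact List.getElem_mem h0
    have hne : u 0 ≠ 0 := by
      intro h
      rw [h] at this
      exact hS this
    omega
  have hlb : ∀ k, k < ℓ → k + 1 ≤ u k := by
    intro k hk
    have h := hgap k 0 (by omega)
    rw [Nat.zero_add] at h
    have h0 := hu0 (by omega)
    omega
  set p : ℕ → ℕ := fun i => u (ℓ - 1 - i) - (ℓ - 1 - i) with hp
  set w : List ℕ := (List.range ℓ).map p with hw
  have hwlen : w.length = ℓ := by simp [hw]
  have hwsorted : w.SortedGE := by
    rw [List.sortedGE_iff_pairwise, hw, List.pairwise_map]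
    rw [List.pairwise_iff_getElem]
    intro a c ha' hc' hac
    simp only [List.length_range] at ha' hc'
    simp only [List.getElem_range]
    show p c ≤ p a
    simp only [hp]
    have hgap2 := hgap ((ℓ - 1 - a) - (ℓ - 1 - c)) (ℓ - 1 - c) (by omega)
    have heq : (ℓ - 1 - c) + ((ℓ - 1 - a) - (ℓ - 1 - c)) = ℓ - 1 - a := by omega
    rw [heq] at hgap2
    have hl1 := hlb (ℓ - 1 - c) (by omega)
    omega
  have hwpos : ∀ x ∈ w, 0 < x := by
    intro x hx
    rw [hw, List.mem_map] at hx
    obtain ⟨i, hi, rfl⟩ := hx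
    rw [List.mem_range] at hi
    have := hlb (ℓ - 1 - i) (by omega)
    simp only [hp]
    omega
  refine ⟨YoungDiagram.ofRowLens w hwsorted, ?_⟩
  set Y := YoungDiagram.ofRowLens w hwsorted with hY
  have hcol : Y.colLen 0 = ℓ := by
    have h1 := YoungDiagram.rowLens_length_ofRowLens (hw := hwsorted) hwpos
    rw [YoungDiagram.length_rowLens] at h1
    rw [hY, h1, hwlen]
  have hrow : ∀ i, i < ℓ → Y.rowLen i = p i := by
    intro i hi
    have hi' : i < w.length := by omega
    have := YoungDiagram.rowLen_ofRowLens (w := w) (hw := hwsorted) ⟨i, hi'⟩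
    rw [hY, this]
    simp [hw]
  ext x
  rw [mem_betaSet, ← hmemL]
  constructor
  · rintro ⟨i, hi, hbi⟩
    rw [hcol] at hi
    have hri := hrow i hi
    unfold b at hbi
    rw [hcol, hri] at hbi
    simp only [hp] at hbi
    have := hlb (ℓ - 1 - i) (by omega)
    have hx : u (ℓ - 1 - i) = x := by omega
    rw [← hx]
    have hidx : ℓ - 1 - i < L.length := by omega
    have : u (ℓ - 1 - i) = L[ℓ - 1 - i] := by
      simp [hu, List.getD_eq_getElem?_getD, List.getElem?_eq_getElem, hidx]
    rw [this]
    exact List.getElem_mem hidx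
  · intro hx
    obtain ⟨a, ha, hax⟩ := List.getElem_of_mem hx
    have ha' : a < ℓ := by omega
    refine ⟨ℓ - 1 - a, by rw [hcol]; omega, ?_⟩
    have heqa : ℓ - 1 - (ℓ - 1 - a) = a := by omega
    unfold b
    rw [hcol, hrow _ (by omega)]
    simp only [hp, heqa]
    have hua : u a = x := by
      simp [hu, List.getD_eq_getElem?_getD, List.getElem?_eq_getElem, ha, hax]
    have := hlb a ha'
    omega

lemma betaSet_not_zero {Y : YoungDiagram} : 0 ∉ betaSet Y := by
  rw [mem_betaSet]
  rintro ⟨i, hi, hbi⟩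
  have := (row_pos_iff Y).1 hi
  unfold b at hbi
  omega

lemma unique_decomp {n a c j j' : ℕ} (hj : 1 ≤ j) (hj2 : j ≤ n - 1) (hj' : 1 ≤ j')
    (hj2' : j' ≤ n - 1) (h : a * n + j = c * n + j') : a = c ∧ j = j' := by
  have hn2 : 2 ≤ n := by omega
  rcases lt_trichotomy a c with hac | hac | hac
  · exfalso
    have h1 : (a + 1) * n ≤ c * n := Nat.mul_le_mul_right n (by omega)
    rw [Nat.succ_mul] at h1
    omega
  · subst hac
    omega
  · exfalso
    have h1 : (c + 1) * n ≤ a * n := Nat.mul_le_mul_right n (by omega)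
    rw [Nat.succ_mul] at h1
    omega

end BetaAux

theorem stmt9 (n d : ℕ) (hn : 0 < n) (hd : 0 < d) (S : Finset ℕ) (hS : 0 ∉ S) :
    (∃ Y : YoungDiagram, DistinctParts Y ∧ IsCore Y n ∧ IsCore Y (d * n + 1) ∧
        betaSet Y = S) ↔
      ((∀ x ∈ S, ∃ i j : ℕ, 1 ≤ i ∧ i ≤ d ∧ 1 ≤ j ∧ j ≤ n - 1 ∧ x = (i - 1) * n + j) ∧
       (∀ i j : ℕ, 1 ≤ i → i ≤ d - 1 → 1 ≤ j → j ≤ n - 1 → i * n + j ∈ S →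
          (i - 1) * n + j ∈ S) ∧
       (∀ j : ℕ, 1 ≤ j → j ≤ n - 2 → j ∈ S → j + 1 ∉ S)) := by
  constructor
  · rintro ⟨Y, hD, hC1, hC2, rfl⟩
    have hcl1 := (BetaAux.isCore_iff Y hn).1 hC1
    have hcl2 := (BetaAux.isCore_iff Y (show 0 < d * n + 1 by omega)).1 hC2
    have hcons := (BetaAux.distinct_iff Y).1 hD
    set S := betaSet Y
    have hnodvd : ∀ x ∈ S, ¬ n ∣ x := by
      rintro x hx ⟨m, rfl⟩
      have hle : m * n ≤ n * m := le_of_eq (mul_comm m n)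
      have := BetaAux.iterate_sub hcl1 m _ hx hle
      rw [mul_comm n m, Nat.sub_self] at this
      exact hS this
    refine ⟨?_, ?_, ?_⟩
    · intro x hx
      have hnd := hnodvd x hx
      have hx0 : x ≠ 0 := by rintro rfl; exact hS hx
      have hxlt : x < d * n := by
        by_contra hge
        push_neg at hge
        have hne : x ≠ d * n := by
          rintro rfl
          exact hnd (dvd_mul_left n d)
        have hx1 : d * n + 1 ≤ x := by omega
        have h1 := hcl2 x hx hx1
        have h2 := BetaAux.iterate_sub hcl1 d x hx (by omega)
        have h3 : x - (d * n + 1) + 1 = x - d * n := by omega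
        exact hcons _ h1 (h3 ▸ h2)
      obtain ⟨q, r, hr, hqr⟩ : ∃ q r, r < n ∧ x = q * n + r :=
        ⟨x / n, x % n, Nat.mod_lt _ hn, (Nat.div_add_mod' x n).symm⟩
      have hrne : r ≠ 0 := by
        rintro rfl
        rw [Nat.add_zero] at hqr
        exact hnd (hqr ▸ dvd_mul_left n q)
      have hqd : q < d := by
        by_contra hc
        push_neg at hc
        have := Nat.mul_le_mul_right n hc
        omega
      refine ⟨q + 1, r, by omega, by omega, by omega, by omega, ?_⟩
      simp only [Nat.add_sub_cancel]
      exact hqr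
    · intro i j hi1 hi2 hj1 hj2 hmem
      have hni : n ≤ i * n := Nat.le_mul_of_pos_left n hi1
      have h1 := hcl1 _ hmem (by omega)
      have hsm := Nat.sub_mul i 1 n
      have he : (i - 1) * n + j = i * n + j - n := by
        rw [hsm]
        omega
      rw [he]
      exact h1
    · intro j hj1 hj2 hjS
      exact hcons j hjS
  · rintro ⟨h1, h2, h3⟩
    have haux : ∀ i0 j0, 1 ≤ j0 → j0 ≤ n - 1 → i0 * n + j0 ∈ S → j0 ∈ S := by
      intro i0
      induction i0 with
      | zero => intro j0 _ _ h; simpa using h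
      | succ k ih =>
        intro j0 hj01 hj02 hmem
        obtain ⟨ii, jj, hii1, hii2, hjj1, hjj2, hde⟩ := h1 _ hmem
        obtain ⟨hik, hjk⟩ := BetaAux.unique_decomp hj01 hj02 hjj1 hjj2 hde
        have hkd : k + 1 ≤ d - 1 := by omega
        have := h2 (k + 1) j0 (by omega) hkd hj01 hj02 hmem
        simp only [Nat.add_sub_cancel] at this
        exact ih j0 hj01 hj02 this
    have hcl1 : ∀ x ∈ S, n ≤ x → x - n ∈ S := by
      intro x hx hnx
      obtain ⟨i, j, hi1, hi2, hj1, hj2, rfl⟩ := h1 x hx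
      have hi2' : 2 ≤ i := by
        by_contra hc
        push_neg at hc
        have hieq : i = 1 := by omega
        subst hieq
        simp only [Nat.sub_self, Nat.zero_mul, Nat.zero_add] at hnx
        omega
      have hmem' : (i - 1) * n + j ∈ S := hx
      have := h2 (i - 1) j (by omega) (by omega) hj1 hj2 hmem'
      have hni : n ≤ (i - 1) * n := Nat.le_mul_of_pos_left n (by omega)
      have hsm : (i - 1 - 1) * n = (i - 1) * n - 1 * n := Nat.sub_mul (i - 1) 1 n
      have he : (i - 1 - 1) * n + j = (i - 1) * n + j - n := by
        rw [hsm]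
        omega
      rw [he] at this
      exact this
    have hcl2 : ∀ x ∈ S, d * n + 1 ≤ x → x - (d * n + 1) ∈ S := by
      intro x hx hge
      exfalso
      obtain ⟨i, j, hi1, hi2, hj1, hj2, rfl⟩ := h1 x hx
      have hle : (i - 1) * n ≤ (d - 1) * n := Nat.mul_le_mul_right n (by omega)
      have hdm : (d - 1) * n = d * n - 1 * n := Nat.sub_mul d 1 n
      have hnd : n ≤ d * n := Nat.le_mul_of_pos_left n hd
      omega
    have hcons : ∀ x ∈ S, x + 1 ∉ S := by
      intro x hx hx1
      obtain ⟨i, j, hi1, hi2, hj1, hj2, heqx⟩ := h1 x hx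
      rcases Nat.lt_or_ge j (n - 1) with hjlt | hjge
      · have hxS : (i - 1) * n + j ∈ S := heqx ▸ hx
        have hx1S : (i - 1) * n + (j + 1) ∈ S := by
          have : (i - 1) * n + (j + 1) = x + 1 := by omega
          rw [this]
          exact hx1
        have hjS := haux (i - 1) j hj1 hj2 hxS
        have hj1S := haux (i - 1) (j + 1) (by omega) (by omega) hx1S
        exact h3 j hj1 (by omega) hjS hj1S
      · have hjeq : j = n - 1 := by omega
        obtain ⟨i', j', hi1', hi2', hj1', hj2', heq'⟩ := h1 _ hx1
        -- x + 1 = (i-1)*n + (n-1) + 1 = ((i-1)+1)*n = i*n... careful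
        have hmul : (i - 1 + 1) * n = (i - 1) * n + n := Nat.succ_mul _ _
        have heqn : (i - 1 + 1) * n = (i' - 1) * n + j' := by omega
        rcases lt_trichotomy (i - 1 + 1) (i' - 1) with hac | hac | hac
        · have hh : (i - 1 + 1 + 1) * n ≤ (i' - 1) * n := Nat.mul_le_mul_right n (by omega)
          rw [Nat.succ_mul] at hh
          omega
        · rw [← hac] at heqn
          omega
        · have hh : (i' - 1 + 1) * n ≤ (i - 1 + 1) * n := Nat.mul_le_mul_right n (by omega)
          rw [Nat.succ_mul] at hh
          omega
    obtain ⟨Y, hY⟩ := BetaAux.exists_diagram S hS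
    refine ⟨Y, ?_, ?_, ?_, hY⟩
    · rw [BetaAux.distinct_iff, hY]
      exact hcons
    · rw [BetaAux.isCore_iff Y hn, hY]
      exact hcl1
    · rw [BetaAux.isCore_iff Y (show 0 < d * n + 1 by omega), hY]
      exact hcl2
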